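/- Oriented version of Dunwoody's tree construction. Let V be a set and let 𝓔 be a nonempty collection of subsets of V such that: 𝓔 is finitely separating; 𝓔 is nested; ∅ ∉ 𝓔; V ∉ 𝓔; and for each e ∈ 𝓔, the complement eᶜ does not belong to 𝓔. For e ∈ 𝓔 set ι(e) = {d ∈ 𝓔 : e ⊆ d or eᶜ ⊊ d} and τ'(e) = {d ∈ 𝓔 : e ⊊ d or eᶜ ⊆ d}. Let U(𝓔) be the simple graph whose vertex set is {ι(e) : e ∈ 𝓔} ∪ {τ'(e) : e ∈ 𝓔} and in which x and y are adjacent if and only if there exists e ∈ 𝓔 with {x,y} = {ι(e), τ'(e)}. Then U(𝓔) is a tree (connected and acyclic), and for any two vertices x and y of U(𝓔) the graph distance between x and y in U(𝓔) equals the cardinality of the symmetric difference x ∆ y. -/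

import Mathlib

/-- `ι(e) = {d ∈ 𝓔 : e ⊆ d or eᶜ ⊊ d}`. -/
def dunwoodyIota {V : Type*} (𝓔 : Set (Set V)) (e : Set V) : Set (Set V) :=
  {d ∈ 𝓔 | e ⊆ d ∨ eᶜ ⊂ d}

/-- `τ'(e) = {d ∈ 𝓔 : e ⊊ d or eᶜ ⊆ d}`. -/
def dunwoodyTau' {V : Type*} (𝓔 : Set (Set V)) (e : Set V) : Set (Set V) :=
  {d ∈ 𝓔 | e ⊂ d ∨ eᶜ ⊆ d}

namespace Dunwoody

open Set

variable {V : Type*}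

/-- Bundled hypotheses. -/
structure Good (𝓔 : Set (Set V)) : Prop where
  nested : ∀ e ∈ 𝓔, ∀ f ∈ 𝓔, e ∩ f = ∅ ∨ e ∩ fᶜ = ∅ ∨ eᶜ ∩ f = ∅ ∨ eᶜ ∩ fᶜ = ∅
  empty : ∅ ∉ 𝓔
  univ : Set.univ ∉ 𝓔
  compl : ∀ e ∈ 𝓔, eᶜ ∉ 𝓔

variable {𝓔 : Set (Set V)} {e f d : Set V} {x y : Set (Set V)}

lemma mem_iota_iff : d ∈ dunwoodyIota 𝓔 e ↔ d ∈ 𝓔 ∧ (e ⊆ d ∨ eᶜ ⊂ d) := Iff.rfl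

lemma mem_tau_iff : d ∈ dunwoodyTau' 𝓔 e ↔ d ∈ 𝓔 ∧ (e ⊂ d ∨ eᶜ ⊆ d) := Iff.rfl

lemma iota_subset : dunwoodyIota 𝓔 e ⊆ 𝓔 := fun _ h => h.1

lemma tau_subset : dunwoodyTau' 𝓔 e ⊆ 𝓔 := fun _ h => h.1

lemma Good.ne_empty (h : Good 𝓔) (he : e ∈ 𝓔) : e.Nonempty :=
  nonempty_iff_ne_empty.2 fun h0 => h.empty (h0 ▸ he)

lemma Good.compl_ne_empty (h : Good 𝓔) (he : e ∈ 𝓔) : eᶜ.Nonempty := by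
  rw [nonempty_compl]
  rintro rfl; exact h.univ he

lemma Good.ne_compl (h : Good 𝓔) (he : e ∈ 𝓔) (hd : d ∈ 𝓔) : d ≠ eᶜ := by
  rintro rfl; exact h.compl e he hd

/-- complement containment upgrade to strict. -/
lemma Good.compl_ssubset (h : Good 𝓔) (he : e ∈ 𝓔) (hd : d ∈ 𝓔) (hsub : eᶜ ⊆ d) : eᶜ ⊂ d :=
  ssubset_of_subset_of_ne hsub fun h0 => h.ne_compl he hd h0.symm

lemma compl_ssubset_comm : eᶜ ⊂ d ↔ dᶜ ⊂ e := by
  rw [Set.ssubset_def, Set.ssubset_def, compl_subset_comm, subset_compl_comm]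

lemma Good.nested' (h : Good 𝓔) (he : e ∈ 𝓔) (hd : d ∈ 𝓔) :
    e ⊆ d ∨ d ⊆ e ∨ e ⊆ dᶜ ∨ dᶜ ⊆ e := by
  rcases h.nested e he d hd with h1 | h1 | h1 | h1
  · exact Or.inr (Or.inr (Or.inl (by rw [subset_compl_iff_disjoint_right, disjoint_iff_inter_eq_empty]; exact h1)))
  · exact Or.inl (by rw [← diff_eq] at h1; exact diff_eq_empty.1 h1)
  · refine Or.inr (Or.inl ?_)
    rw [inter_comm, ← diff_eq] at h1; exact diff_eq_empty.1 h1
  · refine Or.inr (Or.inr (Or.inr ?_))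
    rw [← compl_union, compl_empty_iff] at h1
    intro v hv
    by_contra hve
    rcases (h1 ▸ mem_univ v : v ∈ e ∪ d) with h2 | h2
    · exact hve h2
    · exact hv h2

lemma self_mem_iota (he : e ∈ 𝓔) : e ∈ dunwoodyIota 𝓔 e := ⟨he, Or.inl subset_rfl⟩

lemma Good.not_self_mem_tau (h : Good 𝓔) (he : e ∈ 𝓔) : e ∉ dunwoodyTau' 𝓔 e := by
  rintro ⟨-, h1 | h1⟩
  · exact h1.2 subset_rfl
  · apply h.univ
    have : e = Set.univ := by
      rw [← compl_union_self e, union_eq_self_of_subset_left h1]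
    exact this ▸ he

lemma Good.tau_eq (h : Good 𝓔) (he : e ∈ 𝓔) :
    dunwoodyTau' 𝓔 e = dunwoodyIota 𝓔 e \ {e} := by
  ext d
  constructor
  · rintro ⟨hd, h1 | h1⟩
    · exact ⟨⟨hd, Or.inl h1.1⟩, fun h2 => h1.2 (by simp_all)⟩
    · refine ⟨⟨hd, Or.inr (h.compl_ssubset he hd h1)⟩, ?_⟩
      rintro rfl
      exact h.not_self_mem_tau he ⟨he, Or.inr h1⟩
  · rintro ⟨⟨hd, h1 | h1⟩, h2⟩
    · exact ⟨hd, Or.inl (ssubset_of_subset_of_ne h1 (fun h3 => h2 (by simp [h3.symm])))⟩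
    · exact ⟨hd, Or.inr h1.1⟩

lemma Good.iota_eq (h : Good 𝓔) (he : e ∈ 𝓔) :
    dunwoodyIota 𝓔 e = dunwoodyTau' 𝓔 e ∪ {e} := by
  rw [h.tau_eq he, diff_union_self, union_eq_self_of_subset_right]
  simp [self_mem_iota he]

lemma Good.symmDiff_iota_tau (h : Good 𝓔) (he : e ∈ 𝓔) :
    symmDiff (dunwoodyIota 𝓔 e) (dunwoodyTau' 𝓔 e) = {e} := by
  rw [h.tau_eq he]
  ext d
  simp only [mem_symmDiff, mem_diff, mem_singleton_iff]
  constructor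
  · rintro (⟨h1, h2⟩ | ⟨⟨h1, h2⟩, h3⟩)
    · by_contra h3; exact h2 ⟨h1, h3⟩
    · exact absurd h1 h3
  · rintro rfl
    exact Or.inl ⟨self_mem_iota he, fun h1 => h1.2 rfl⟩

/-- vertex predicate -/
def Vtx (𝓔 : Set (Set V)) (x : Set (Set V)) : Prop :=
  ∃ f ∈ 𝓔, x = dunwoodyIota 𝓔 f ∨ x = dunwoodyTau' 𝓔 f

lemma Vtx.subset (hx : Vtx 𝓔 x) : ∀ e ∈ x, e ∈ 𝓔 := by
  obtain ⟨f, hf, rfl | rfl⟩ := hx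
  exacts [fun e he => he.1, fun e he => he.1]

/-- vertices are upward closed -/
lemma Good.vtx_up (h : Good 𝓔) (hx : Vtx 𝓔 x) (he : e ∈ x) (hd : d ∈ 𝓔)
    (hsub : e ⊆ d) : d ∈ x := by
  obtain ⟨f, hf, rfl | rfl⟩ := hx
  · rcases he.2 with h1 | h1
    · exact ⟨hd, Or.inl (h1.trans hsub)⟩
    · exact ⟨hd, Or.inr (h1.trans_subset hsub)⟩
  · rcases he.2 with h1 | h1
    · exact ⟨hd, Or.inl (h1.trans_subset hsub)⟩
    · exact ⟨hd, Or.inr (h1.trans hsub)⟩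

/-- two members of a vertex cannot be disjoint -/
lemma Good.vtx_not_disjoint (h : Good 𝓔) (hx : Vtx 𝓔 x) (he : e ∈ x) (hd : d ∈ x)
    (hdisj : e ⊆ dᶜ) : False := by
  have hd𝓔 : d ∈ 𝓔 := hx.subset d hd
  have hddf : ∀ {f : Set V}, f ⊆ e → d ⊆ fᶜ := fun h1 => subset_compl_comm.1 (h1.trans hdisj)
  obtain ⟨f, hf, rfl | rfl⟩ := hx
  · rcases he.2 with h1 | h1 <;> rcases hd.2 with h2 | h2
    · obtain ⟨v, hv⟩ := h.ne_empty hf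
      exact hdisj (h1 hv) (h2 hv)
    · exact h2.not_subset (hddf h1)
    · exact h1.not_subset (hdisj.trans (compl_subset_compl.2 h2))
    · obtain ⟨v, hv⟩ := h.compl_ne_empty hf
      exact hdisj (h1.subset hv) (h2.subset hv)
  · rcases he.2 with h1 | h1 <;> rcases hd.2 with h2 | h2
    · obtain ⟨v, hv⟩ := h.ne_empty hf
      exact hdisj (h1.subset hv) (h2.subset hv)
    · exact h.ne_compl hf hd𝓔 (subset_antisymm (hddf h1.subset) h2)
    · exact h2.not_subset (compl_subset_compl.1 (h1.trans hdisj))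
    · obtain ⟨v, hv⟩ := h.compl_ne_empty hf
      exact hdisj (h1 hv) (h2 hv)

/-- if `e ∉ x` and `eᶜ ⊂ d` then `d ∈ x` -/
lemma Good.vtx_down_compl (h : Good 𝓔) (hx : Vtx 𝓔 x) (he𝓔 : e ∈ 𝓔) (he : e ∉ x)
    (hd : d ∈ 𝓔) (hsub : eᶜ ⊂ d) : d ∈ x := by
  obtain ⟨f, hf, rfl | rfl⟩ := hx
  · rcases h.nested' hf he𝓔 with h1 | h1 | h1 | h1
    · -- f ⊆ e : contradiction with e ∉ ι f
      exact absurd ⟨he𝓔, Or.inl h1⟩ he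
    · -- e ⊆ f : dᶜ ⊂ e ⊆ f hence fᶜ ⊂ d
      refine ⟨hd, Or.inr (compl_ssubset_comm.2 ?_)⟩
      exact (compl_ssubset_comm.1 hsub).trans_subset h1
    · -- f ⊆ eᶜ ⊂ d
      exact ⟨hd, Or.inl (h1.trans hsub.1)⟩
    · -- eᶜ ⊆ f, i.e. fᶜ ⊆ e, strict, so e ∈ ι f, contradiction
      refine absurd ⟨he𝓔, Or.inr (h.compl_ssubset hf he𝓔 ?_)⟩ he
      exact compl_subset_comm.1 h1
  · rcases h.nested' hf he𝓔 with h1 | h1 | h1 | h1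
    · -- f ⊆ e : since e ∉ τ' f, ¬ f ⊂ e so f = e, then fᶜ = eᶜ ⊆ d
      have hfe : f = e := by
        by_contra hne
        exact he ⟨he𝓔, Or.inl (ssubset_of_subset_of_ne h1 hne)⟩
      exact ⟨hd, Or.inr (hfe ▸ hsub.1)⟩
    · -- e ⊆ f : dᶜ ⊂ e ⊆ f hence fᶜ ⊆ d
      refine ⟨hd, Or.inr (compl_subset_comm.1 (((compl_ssubset_comm.1 hsub).1).trans h1))⟩
    · -- f ⊆ eᶜ ⊂ d
      exact ⟨hd, Or.inl (h1.trans_ssubset hsub)⟩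
    · -- eᶜ ⊆ f i.e. fᶜ ⊆ e so e ∈ τ' f, contradiction
      exact absurd ⟨he𝓔, Or.inr (compl_subset_comm.1 h1)⟩ he



lemma Good.G1 (h : Good 𝓔) (hx : Vtx 𝓔 x) (hy : Vtx 𝓔 y) (hex : e ∈ x) (hey : e ∉ y)
    (hdx : d ∈ x) (hdy : d ∈ y) : d ∈ dunwoodyIota 𝓔 e := by
  have he𝓔 : e ∈ 𝓔 := hx.subset e hex
  have hd𝓔 : d ∈ 𝓔 := hx.subset d hdx
  rcases h.nested' he𝓔 hd𝓔 with h1 | h1 | h1 | h1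
  · exact ⟨hd𝓔, Or.inl h1⟩
  · exact absurd (h.vtx_up hy hdy he𝓔 h1) hey
  · exact (h.vtx_not_disjoint hx hex hdx h1).elim
  · exact ⟨hd𝓔, Or.inr (h.compl_ssubset he𝓔 hd𝓔 (compl_subset_comm.1 h1))⟩

lemma Good.G2 (h : Good 𝓔) (hx : Vtx 𝓔 x) (hy : Vtx 𝓔 y) (hex : e ∈ x) (hey : e ∉ y)
    (hd𝓔 : d ∈ 𝓔) (hdx : d ∉ x) (hdy : d ∉ y) : d ∉ dunwoodyIota 𝓔 e := by
  rintro ⟨-, h1 | h1⟩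
  · exact hdx (h.vtx_up hx hex hd𝓔 h1)
  · exact hdy (h.vtx_down_compl hy (hx.subset e hex) hey hd𝓔 h1)

lemma Good.between_iota (h : Good 𝓔) (hx : Vtx 𝓔 x) (hy : Vtx 𝓔 y) (hex : e ∈ x)
    (hey : e ∉ y) : symmDiff x (dunwoodyIota 𝓔 e) ⊆ symmDiff x y \ {e} := by
  intro d hd
  have he𝓔 : e ∈ 𝓔 := hx.subset e hex
  have hd𝓔 : d ∈ 𝓔 := by
    rcases mem_symmDiff.1 hd with ⟨h1, -⟩ | ⟨h1, -⟩
    exacts [hx.subset d h1, h1.1]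
  have hdne : d ≠ e := by
    rintro rfl
    rcases mem_symmDiff.1 hd with ⟨h1, h2⟩ | ⟨h1, h2⟩
    exacts [h2 (self_mem_iota he𝓔), h2 hex]
  refine ⟨?_, hdne⟩
  rw [mem_symmDiff]
  rcases mem_symmDiff.1 hd with ⟨h1, h2⟩ | ⟨h1, h2⟩
  · exact Or.inl ⟨h1, fun hdy => h2 (h.G1 hx hy hex hey h1 hdy)⟩
  · refine Or.inr ⟨?_, h2⟩
    by_contra hdy
    exact (h.G2 hx hy hex hey hd𝓔 h2 hdy) h1

lemma Good.between_tau (h : Good 𝓔) (hx : Vtx 𝓔 x) (hy : Vtx 𝓔 y) (hey : e ∈ y)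
    (hex : e ∉ x) : symmDiff x (dunwoodyTau' 𝓔 e) ⊆ symmDiff x y \ {e} := by
  intro d hd
  have he𝓔 : e ∈ 𝓔 := hy.subset e hey
  have hd𝓔 : d ∈ 𝓔 := by
    rcases mem_symmDiff.1 hd with ⟨h1, -⟩ | ⟨h1, -⟩
    exacts [hx.subset d h1, h1.1]
  have hdne : d ≠ e := by
    rintro rfl
    rcases mem_symmDiff.1 hd with ⟨h1, h2⟩ | ⟨h1, h2⟩
    exacts [hex h1, (h.not_self_mem_tau he𝓔) h1]
  refine ⟨?_, hdne⟩
  rw [mem_symmDiff]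
  rcases mem_symmDiff.1 hd with ⟨h1, h2⟩ | ⟨h1, h2⟩
  · refine Or.inl ⟨h1, fun hdy => h2 ?_⟩
    have h3 := h.G1 hy hx hey hex hdy h1
    rw [h.tau_eq he𝓔]
    exact ⟨h3, hdne⟩
  · refine Or.inr ⟨?_, h2⟩
    by_contra hdy
    exact (h.G2 hy hx hey hex hd𝓔 hdy h2) ((h.tau_eq he𝓔 ▸ h1).1)



variable {v w : V}

/-- case `e ⊆ f`, element on the `ι e` side -/
lemma Good.aux1 (h : Good 𝓔) (he : e ∈ 𝓔) (hf : f ∈ 𝓔) (hef : e ⊆ f)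
    (hd : d ∈ dunwoodyIota 𝓔 e) (hdf : d ∉ dunwoodyIota 𝓔 f) (hv : v ∈ e) (hw : w ∈ fᶜ) :
    v ∈ d ∧ w ∉ d := by
  have hd𝓔 : d ∈ 𝓔 := hd.1
  have hed : e ⊆ d := by
    rcases hd.2 with h1 | h1
    · exact h1
    · exact absurd ⟨hd𝓔, Or.inr (h.compl_ssubset hf hd𝓔
        ((compl_subset_compl.2 hef).trans h1.subset))⟩ hdf
  refine ⟨hed hv, ?_⟩
  rcases h.nested' hd𝓔 hf with h1 | h1 | h1 | h1
  · exact fun hwd => hw (h1 hwd)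
  · exact absurd ⟨hd𝓔, Or.inl h1⟩ hdf
  · exact absurd (hef hv) (h1 (hed hv))
  · exact absurd ⟨hd𝓔, Or.inr (h.compl_ssubset hf hd𝓔 h1)⟩ hdf

/-- case `e ⊆ f`, element on the `ι f` side -/
lemma Good.aux2 (h : Good 𝓔) (he : e ∈ 𝓔) (hf : f ∈ 𝓔) (hef : e ⊆ f)
    (hd : d ∈ dunwoodyIota 𝓔 f) (hde : d ∉ dunwoodyIota 𝓔 e) (hv : v ∈ e) (hw : w ∈ fᶜ) :
    w ∈ d ∧ v ∉ d := by
  have hd𝓔 : d ∈ 𝓔 := hd.1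
  have hfd : fᶜ ⊂ d := by
    rcases hd.2 with h1 | h1
    · exact absurd ⟨hd𝓔, Or.inl (hef.trans h1)⟩ hde
    · exact h1
  refine ⟨hfd.subset hw, ?_⟩
  rcases h.nested' hd𝓔 he with h1 | h1 | h1 | h1
  · obtain ⟨u, hu⟩ := h.compl_ne_empty hf
    exact absurd (hef (h1 (hfd.subset hu))) hu
  · exact absurd ⟨hd𝓔, Or.inl h1⟩ hde
  · exact fun hvd => (h1 hvd) hv
  · exact absurd ⟨hd𝓔, Or.inr (h.compl_ssubset he hd𝓔 h1)⟩ hde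

/-- case `e ⊆ fᶜ`, element on the `ι e` side -/
lemma Good.aux3 (h : Good 𝓔) (he : e ∈ 𝓔) (hf : f ∈ 𝓔) (hdisj : e ⊆ fᶜ)
    (hd : d ∈ dunwoodyIota 𝓔 e) (hdf : d ∉ dunwoodyIota 𝓔 f) (hv : v ∈ e) (hw : w ∈ f) :
    v ∈ d ∧ w ∉ d := by
  have hd𝓔 : d ∈ 𝓔 := hd.1
  have hed : e ⊆ d := by
    rcases hd.2 with h1 | h1
    · exact h1
    · exact absurd ⟨hd𝓔, Or.inl ((subset_compl_comm.1 hdisj).trans h1.subset)⟩ hdf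
  refine ⟨hed hv, ?_⟩
  rcases h.nested' hd𝓔 hf with h1 | h1 | h1 | h1
  · exact absurd (h1 (hed hv)) (hdisj hv)
  · exact absurd ⟨hd𝓔, Or.inl h1⟩ hdf
  · exact fun hwd => (h1 hwd) hw
  · exact absurd ⟨hd𝓔, Or.inr (h.compl_ssubset hf hd𝓔 h1)⟩ hdf

/-- case `eᶜ ⊆ f`, element on the `ι e` side -/
lemma Good.aux4 (h : Good 𝓔) (he : e ∈ 𝓔) (hf : f ∈ 𝓔) (hsub4 : eᶜ ⊆ f)
    (hd : d ∈ dunwoodyIota 𝓔 e) (hdf : d ∉ dunwoodyIota 𝓔 f) (hv : v ∈ fᶜ) (hw : w ∈ eᶜ) :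
    w ∈ d ∧ v ∉ d := by
  have hd𝓔 : d ∈ 𝓔 := hd.1
  have hfe : fᶜ ⊆ e := compl_subset_comm.1 hsub4
  have hcd : eᶜ ⊂ d := by
    rcases hd.2 with h1 | h1
    · exfalso
      rcases h.nested' hd𝓔 hf with h2 | h2 | h2 | h2
      · by_cases hve : v ∈ e
        · exact absurd (h2 (h1 hve)) hv
        · exact absurd (h2 (h1 (hfe hv))) hv
      · exact hdf ⟨hd𝓔, Or.inl h2⟩
      · exact h.ne_compl hf hd𝓔 (subset_antisymm h2 (hfe.trans h1))
      · exact hdf ⟨hd𝓔, Or.inr (h.compl_ssubset hf hd𝓔 h2)⟩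
    · exact h1
  refine ⟨hcd.subset hw, ?_⟩
  rcases h.nested' hd𝓔 hf with h1 | h1 | h1 | h1
  · exact fun hvd => hv (h1 hvd)
  · exact absurd ⟨hd𝓔, Or.inl h1⟩ hdf
  · obtain ⟨u, hu⟩ := h.compl_ne_empty he
    exact absurd (hfe (h1 (hcd.subset hu))) hu
  · exact absurd ⟨hd𝓔, Or.inr (h.compl_ssubset hf hd𝓔 h1)⟩ hdf

lemma Good.fin_iota_iota (h : Good 𝓔)
    (hsep : ∀ v w : V, (symmDiff {d ∈ 𝓔 | v ∈ d} {d ∈ 𝓔 | w ∈ d}).Finite)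
    (he : e ∈ 𝓔) (hf : f ∈ 𝓔) :
    (symmDiff (dunwoodyIota 𝓔 e) (dunwoodyIota 𝓔 f)).Finite := by
  rcases eq_or_ne e f with rfl | hne
  · simp [symmDiff_self]
  have key : ∃ v w : V, ∀ d, d ∈ symmDiff (dunwoodyIota 𝓔 e) (dunwoodyIota 𝓔 f) →
      d ∈ 𝓔 ∧ ((v ∈ d ∧ w ∉ d) ∨ (w ∈ d ∧ v ∉ d)) := by
    rcases h.nested' he hf with h1 | h1 | h1 | h1
    · obtain ⟨v, hv⟩ := h.ne_empty he
      obtain ⟨w, hw⟩ := h.compl_ne_empty hf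
      refine ⟨v, w, fun d hd => ?_⟩
      rcases mem_symmDiff.1 hd with ⟨h2, h3⟩ | ⟨h2, h3⟩
      · exact ⟨h2.1, Or.inl (h.aux1 he hf h1 h2 h3 hv hw)⟩
      · exact ⟨h2.1, Or.inr (h.aux2 he hf h1 h2 h3 hv hw)⟩
    · obtain ⟨v, hv⟩ := h.ne_empty hf
      obtain ⟨w, hw⟩ := h.compl_ne_empty he
      refine ⟨v, w, fun d hd => ?_⟩
      rcases mem_symmDiff.1 hd with ⟨h2, h3⟩ | ⟨h2, h3⟩
      · exact ⟨h2.1, Or.inr (h.aux2 hf he h1 h2 h3 hv hw)⟩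
      · exact ⟨h2.1, Or.inl (h.aux1 hf he h1 h2 h3 hv hw)⟩
    · obtain ⟨v, hv⟩ := h.ne_empty he
      obtain ⟨w, hw⟩ := h.ne_empty hf
      refine ⟨v, w, fun d hd => ?_⟩
      rcases mem_symmDiff.1 hd with ⟨h2, h3⟩ | ⟨h2, h3⟩
      · exact ⟨h2.1, Or.inl (h.aux3 he hf h1 h2 h3 hv hw)⟩
      · have h4 := h.aux3 hf he (subset_compl_comm.1 h1) h2 h3 hw hv
        exact ⟨h2.1, Or.inr h4⟩
    · obtain ⟨v, hv⟩ := h.compl_ne_empty hf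
      obtain ⟨w, hw⟩ := h.compl_ne_empty he
      have h1' : eᶜ ⊆ f := compl_subset_comm.1 h1
      refine ⟨v, w, fun d hd => ?_⟩
      rcases mem_symmDiff.1 hd with ⟨h2, h3⟩ | ⟨h2, h3⟩
      · exact ⟨h2.1, Or.inr (h.aux4 he hf h1' h2 h3 hv hw)⟩
      · have h4 := h.aux4 hf he h1 h2 h3 hw hv
        exact ⟨h2.1, Or.inl h4⟩
  obtain ⟨v, w, hvw⟩ := key
  refine (hsep v w).subset fun d hd => ?_
  obtain ⟨hd𝓔, hpat⟩ := hvw d hd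
  rw [mem_symmDiff]
  rcases hpat with ⟨h1, h2⟩ | ⟨h1, h2⟩
  · exact Or.inl ⟨⟨hd𝓔, h1⟩, fun h3 => h2 h3.2⟩
  · exact Or.inr ⟨⟨hd𝓔, h1⟩, fun h3 => h2 h3.2⟩

lemma Good.fin_vtx (h : Good 𝓔)
    (hsep : ∀ v w : V, (symmDiff {d ∈ 𝓔 | v ∈ d} {d ∈ 𝓔 | w ∈ d}).Finite)
    (hx : Vtx 𝓔 x) (hy : Vtx 𝓔 y) : (symmDiff x y).Finite := by
  obtain ⟨f, hf, hxe⟩ := hx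
  obtain ⟨g, hg, hye⟩ := hy
  have base := h.fin_iota_iota hsep hf hg
  have hfin : ((symmDiff (dunwoodyIota 𝓔 f) (dunwoodyIota 𝓔 g)) ∪ ({f} ∪ {g}) :
      Set (Set V)).Finite :=
    base.union (((Set.finite_singleton f).union (Set.finite_singleton g)))
  refine hfin.subset fun d hd => ?_
  rcases hxe with rfl | rfl <;> rcases hye with rfl | rfl <;>
    simp only [mem_symmDiff, h.tau_eq hf, h.tau_eq hg, mem_diff, mem_union,
      mem_singleton_iff] at hd ⊢ <;> tauto



lemma Good.exists_pivot (h : Good 𝓔)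
    (hsep : ∀ v w : V, (symmDiff {d ∈ 𝓔 | v ∈ d} {d ∈ 𝓔 | w ∈ d}).Finite) :
    ∀ n, ∀ x y : Set (Set V), Vtx 𝓔 x → Vtx 𝓔 y → (symmDiff x y).ncard = n →
      (symmDiff x y).Nonempty →
      ∃ e ∈ symmDiff x y, (e ∈ x ∧ x = dunwoodyIota 𝓔 e) ∨
        (e ∉ x ∧ x = dunwoodyTau' 𝓔 e) := by
  intro n
  induction n using Nat.strong_induction_on with
  | _ n ih =>
  intro x y hx hy hcard hne
  obtain ⟨e, he⟩ := hne
  have hfinS := h.fin_vtx hsep hx hy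
  have he𝓔 : e ∈ 𝓔 := by
    rcases mem_symmDiff.1 he with ⟨h1, -⟩ | ⟨h1, -⟩
    exacts [hx.subset e h1, hy.subset e h1]
  by_cases hex : e ∈ x
  · have hey : e ∉ y := by
      rcases mem_symmDiff.1 he with ⟨-, h2⟩ | ⟨-, h2⟩
      exacts [h2, (h2 hex).elim]
    have hsub := h.between_iota hx hy hex hey
    by_cases hz : symmDiff x (dunwoodyIota 𝓔 e) = ∅
    · exact ⟨e, he, Or.inl ⟨hex, symmDiff_eq_bot.1 (Set.bot_eq_empty ▸ hz)⟩⟩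
    · have hzvtx : Vtx 𝓔 (dunwoodyIota 𝓔 e) := ⟨e, he𝓔, Or.inl rfl⟩
      have hne' : (symmDiff x (dunwoodyIota 𝓔 e)).Nonempty := nonempty_iff_ne_empty.2 hz
      have hemem : e ∉ symmDiff x (dunwoodyIota 𝓔 e) := fun hc => (hsub hc).2 rfl
      have hssub : symmDiff x (dunwoodyIota 𝓔 e) ⊂ symmDiff x y :=
        Set.ssubset_def ▸ ⟨hsub.trans diff_subset, fun hcon => hemem (hcon he)⟩
      have hlt : (symmDiff x (dunwoodyIota 𝓔 e)).ncard < n :=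
        hcard ▸ Set.ncard_lt_ncard hssub hfinS
      obtain ⟨e', he', hprop⟩ := ih _ hlt x (dunwoodyIota 𝓔 e) hx hzvtx rfl hne'
      exact ⟨e', ((hsub he').1), hprop⟩
  · have hey : e ∈ y := by
      rcases mem_symmDiff.1 he with ⟨h2, -⟩ | ⟨h2, -⟩
      exacts [(hex h2).elim, h2]
    have hsub := h.between_tau hx hy hey hex
    by_cases hz : symmDiff x (dunwoodyTau' 𝓔 e) = ∅
    · exact ⟨e, he, Or.inr ⟨hex, symmDiff_eq_bot.1 (Set.bot_eq_empty ▸ hz)⟩⟩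
    · have hzvtx : Vtx 𝓔 (dunwoodyTau' 𝓔 e) := ⟨e, he𝓔, Or.inr rfl⟩
      have hne' : (symmDiff x (dunwoodyTau' 𝓔 e)).Nonempty := nonempty_iff_ne_empty.2 hz
      have hemem : e ∉ symmDiff x (dunwoodyTau' 𝓔 e) := fun hc => (hsub hc).2 rfl
      have hssub : symmDiff x (dunwoodyTau' 𝓔 e) ⊂ symmDiff x y :=
        Set.ssubset_def ▸ ⟨hsub.trans diff_subset, fun hcon => hemem (hcon he)⟩
      have hlt : (symmDiff x (dunwoodyTau' 𝓔 e)).ncard < n :=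
        hcard ▸ Set.ncard_lt_ncard hssub hfinS
      obtain ⟨e', he', hprop⟩ := ih _ hlt x (dunwoodyTau' 𝓔 e) hx hzvtx rfl hne'
      exact ⟨e', ((hsub he').1), hprop⟩

lemma symm_remove {s t : Set (Set V)} (hes : e ∈ s) (het : e ∉ t) :
    symmDiff (s \ {e}) t = symmDiff s t \ {e} := by
  ext d
  by_cases hde : d = e
  · subst hde
    simp [mem_symmDiff, hes, het]
  · simp only [mem_symmDiff, mem_diff, mem_union, mem_singleton_iff, hde, or_false,
      and_true, not_false_iff]

lemma symm_add {s t : Set (Set V)} (hes : e ∉ s) (het : e ∈ t) :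
    symmDiff (s ∪ {e}) t = symmDiff s t \ {e} := by
  ext d
  by_cases hde : d = e
  · subst hde
    simp [mem_symmDiff, hes, het]
  · simp only [mem_symmDiff, mem_diff, mem_union, mem_singleton_iff, hde, or_false,
      and_true, not_false_iff]



/-- the vertex property of the statement -/
def P (𝓔 : Set (Set V)) (x : Set (Set V)) : Prop :=
  (∃ e ∈ 𝓔, x = dunwoodyIota 𝓔 e) ∨ ∃ e ∈ 𝓔, x = dunwoodyTau' 𝓔 e

lemma P_iff_vtx : P 𝓔 x ↔ Vtx 𝓔 x := by
  constructor
  · rintro (⟨e, he, rfl⟩ | ⟨e, he, rfl⟩)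
    exacts [⟨e, he, Or.inl rfl⟩, ⟨e, he, Or.inr rfl⟩]
  · rintro ⟨e, he, rfl | rfl⟩
    exacts [Or.inl ⟨e, he, rfl⟩, Or.inr ⟨e, he, rfl⟩]

/-- Dunwoody's graph. -/
def Graph (𝓔 : Set (Set V)) : SimpleGraph {x : Set (Set V) // P 𝓔 x} where
  Adj x y := x ≠ y ∧ ∃ e ∈ 𝓔,
    ({x.1, y.1} : Set (Set (Set V))) = {dunwoodyIota 𝓔 e, dunwoodyTau' 𝓔 e}
  symm := ⟨by
    rintro x y ⟨hne, e, he, hp⟩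
    exact ⟨hne.symm, e, he, by rw [Set.pair_comm y.1 x.1]; exact hp⟩⟩
  loopless := ⟨fun x hx => hx.1 rfl⟩

lemma Good.adj_iff (h : Good 𝓔) (x y : {x : Set (Set V) // P 𝓔 x}) :
    (Graph 𝓔).Adj x y ↔ ∃ e ∈ 𝓔,
      ({x.1, y.1} : Set (Set (Set V))) = {dunwoodyIota 𝓔 e, dunwoodyTau' 𝓔 e} := by
  constructor
  · exact fun h1 => h1.2
  · rintro ⟨e, he, hp⟩
    refine ⟨?_, e, he, hp⟩
    rintro rfl
    rcases Set.pair_eq_pair_iff.1 hp with ⟨h1, h2⟩ | ⟨h1, h2⟩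
    · have h3 : e ∈ (x.1 : Set (Set V)) := by rw [h1]; exact self_mem_iota he
      exact h.not_self_mem_tau he (by rwa [h2] at h3)
    · have h3 : e ∈ (x.1 : Set (Set V)) := by rw [h2]; exact self_mem_iota he
      exact h.not_self_mem_tau he (by rwa [h1] at h3)

lemma Good.adj_symmDiff (h : Good 𝓔) {x y : {x : Set (Set V) // P 𝓔 x}}
    (ha : (Graph 𝓔).Adj x y) : ∃ e ∈ 𝓔, symmDiff x.1 y.1 = {e} ∧
      ({x.1, y.1} : Set (Set (Set V))) = {dunwoodyIota 𝓔 e, dunwoodyTau' 𝓔 e} := by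
  obtain ⟨-, e, he, hp⟩ := ha
  refine ⟨e, he, ?_, hp⟩
  rcases Set.pair_eq_pair_iff.1 hp with ⟨h1, h2⟩ | ⟨h1, h2⟩
  · rw [h1, h2]; exact h.symmDiff_iota_tau he
  · rw [h1, h2, symmDiff_comm]; exact h.symmDiff_iota_tau he

lemma Good.walk_toggle (h : Good 𝓔) {x y : {x : Set (Set V) // P 𝓔 x}}
    (q : (Graph 𝓔).Walk x y) : ∀ d, d ∈ symmDiff x.1 y.1 →
      ∃ u z : {x : Set (Set V) // P 𝓔 x}, ∃ _hadj : (Graph 𝓔).Adj u z,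
        s(u, z) ∈ q.edges ∧ symmDiff u.1 z.1 = {d} := by
  induction q with
  | nil =>
    intro d hd
    rw [symmDiff_self, Set.bot_eq_empty] at hd
    exact absurd hd (Set.notMem_empty d)
  | @cons a c b ha q ih =>
    intro d hd
    obtain ⟨e, he, hse, -⟩ := h.adj_symmDiff ha
    by_cases hde : d = e
    · subst hde
      exact ⟨a, c, ha, by simp, hse⟩
    · have hd' : d ∈ symmDiff c.1 b.1 := by
        have hnotac : d ∉ symmDiff a.1 c.1 := by rw [hse]; simpa using hde
        rw [mem_symmDiff]
        rcases mem_symmDiff.1 hd with ⟨h1, h2⟩ | ⟨h1, h2⟩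
        · refine Or.inl ⟨?_, h2⟩
          by_contra hdc
          exact hnotac (mem_symmDiff.2 (Or.inl ⟨h1, hdc⟩))
        · refine Or.inr ⟨h1, ?_⟩
          intro hdc
          exact hnotac (mem_symmDiff.2 (Or.inr ⟨hdc, h2⟩))
      obtain ⟨u, z, huz, hmem, hs⟩ := ih d hd'
      exact ⟨u, z, huz, by simp [hmem], hs⟩

lemma Good.acyclic (h : Good 𝓔) : (Graph 𝓔).IsAcyclic := by
  intro v c hc
  cases c with
  | nil => exact hc.ne_nil rfl
  | @cons a w b ha q =>
    obtain ⟨e, he, hse, hpair⟩ := h.adj_symmDiff ha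
    have hd : e ∈ symmDiff w.1 v.1 := by
      rw [symmDiff_comm, hse]; exact rfl
    obtain ⟨u, z, huz, hmem, hs⟩ := h.walk_toggle q e hd
    obtain ⟨e', he', hse', hpair'⟩ := h.adj_symmDiff huz
    have hee : e' = e := Set.singleton_eq_singleton_iff.1 (hse'.symm.trans hs)
    have hp2 : ({u.1, z.1} : Set (Set (Set V))) = {v.1, w.1} := by
      rw [hpair', hee, ← hpair]
    have hnodup := hc.edges_nodup
    rw [SimpleGraph.Walk.edges_cons, List.nodup_cons] at hnodup
    rcases Set.pair_eq_pair_iff.1 hp2 with ⟨h1, h2⟩ | ⟨h1, h2⟩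
    · have hu : u = v := Subtype.ext h1
      have hz : z = w := Subtype.ext h2
      subst hu; subst hz
      exact hnodup.1 hmem
    · have hu : u = w := Subtype.ext h1
      have hz : z = v := Subtype.ext h2
      subst hu; subst hz
      rw [Sym2.eq_swap] at hmem
      exact hnodup.1 hmem

lemma Good.exists_walk (h : Good 𝓔)
    (hsep : ∀ v w : V, (symmDiff {d ∈ 𝓔 | v ∈ d} {d ∈ 𝓔 | w ∈ d}).Finite) :
    ∀ n, ∀ x y : {x : Set (Set V) // P 𝓔 x}, (symmDiff x.1 y.1).ncard = n →
      ∃ p : (Graph 𝓔).Walk x y, p.length = n := by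
  intro n
  induction n with
  | zero =>
    intro x y hcard
    have hfin := h.fin_vtx hsep (P_iff_vtx.1 x.2) (P_iff_vtx.1 y.2)
    have hempty : symmDiff x.1 y.1 = ∅ := (Set.ncard_eq_zero hfin).1 hcard
    have hxy : x = y := Subtype.ext (symmDiff_eq_bot.1 (Set.bot_eq_empty ▸ hempty))
    subst hxy
    exact ⟨SimpleGraph.Walk.nil, rfl⟩
  | succ n ihn =>
    intro x y hcard
    have hfin := h.fin_vtx hsep (P_iff_vtx.1 x.2) (P_iff_vtx.1 y.2)
    have hne : (symmDiff x.1 y.1).Nonempty :=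
      Set.nonempty_of_ncard_ne_zero (by omega)
    obtain ⟨e, he, hprop⟩ := h.exists_pivot hsep (n + 1) x.1 y.1
      (P_iff_vtx.1 x.2) (P_iff_vtx.1 y.2) hcard hne
    have he𝓔 : e ∈ 𝓔 := by
      rcases mem_symmDiff.1 he with ⟨h1, -⟩ | ⟨h1, -⟩
      exacts [(P_iff_vtx.1 x.2).subset e h1, (P_iff_vtx.1 y.2).subset e h1]
    have hcard' : (symmDiff x.1 y.1 \ {e}).ncard = n := by
      rw [Set.ncard_diff_singleton_of_mem he, hcard]
      omega
    rcases hprop with ⟨hex, hxi⟩ | ⟨hex, hxt⟩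
    · have hey : e ∉ y.1 := by
        rcases mem_symmDiff.1 he with ⟨-, h2⟩ | ⟨-, h2⟩
        exacts [h2, (h2 hex).elim]
      set z : {x : Set (Set V) // P 𝓔 x} := ⟨dunwoodyTau' 𝓔 e, Or.inr ⟨e, he𝓔, rfl⟩⟩ with hz
      have hz1 : z.1 = x.1 \ {e} := by
        show dunwoodyTau' 𝓔 e = x.1 \ {e}
        rw [hxi]; exact h.tau_eq he𝓔
      have hadj : (Graph 𝓔).Adj x z := by
        refine ⟨?_, e, he𝓔, by rw [hxi]⟩
        intro hq
        have h3 : e ∈ z.1 := by rw [← hq]; exact hex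
        rw [hz1] at h3
        exact h3.2 rfl
      have hcz : (symmDiff z.1 y.1).ncard = n := by
        rw [hz1, symm_remove hex hey, hcard']
      obtain ⟨p, hp⟩ := ihn z y hcz
      exact ⟨SimpleGraph.Walk.cons hadj p, by simp [hp]⟩
    · have hey : e ∈ y.1 := by
        rcases mem_symmDiff.1 he with ⟨h2, -⟩ | ⟨h2, -⟩
        exacts [(hex h2).elim, h2]
      set z : {x : Set (Set V) // P 𝓔 x} := ⟨dunwoodyIota 𝓔 e, Or.inl ⟨e, he𝓔, rfl⟩⟩ with hz
      have hz1 : z.1 = x.1 ∪ {e} := by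
        show dunwoodyIota 𝓔 e = x.1 ∪ {e}
        rw [hxt]; exact h.iota_eq he𝓔
      have hadj : (Graph 𝓔).Adj x z := by
        refine ⟨?_, e, he𝓔, by rw [hxt]; exact Set.pair_comm _ _⟩
        intro hq
        have h3 : e ∈ x.1 := by
          rw [hq, hz1]; exact Or.inr rfl
        exact hex h3
      have hcz : (symmDiff z.1 y.1).ncard = n := by
        rw [hz1, symm_add hex hey, hcard']
      obtain ⟨p, hp⟩ := ihn z y hcz
      exact ⟨SimpleGraph.Walk.cons hadj p, by simp [hp]⟩



lemma Good.length_le (h : Good 𝓔)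
    (hsep : ∀ v w : V, (symmDiff {d ∈ 𝓔 | v ∈ d} {d ∈ 𝓔 | w ∈ d}).Finite)
    {x y : {x : Set (Set V) // P 𝓔 x}} (p : (Graph 𝓔).Walk x y) :
    (symmDiff x.1 y.1).ncard ≤ p.length := by
  induction p with
  | nil => simp [symmDiff_self, Set.bot_eq_empty]
  | @cons a c b ha q ih =>
    obtain ⟨e, he, hse, -⟩ := h.adj_symmDiff ha
    have hsub : symmDiff a.1 b.1 ⊆ {e} ∪ symmDiff c.1 b.1 := by
      intro d hd
      by_cases hde : d = e
      · exact Or.inl hde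
      · right
        have hnot : d ∉ symmDiff a.1 c.1 := by rw [hse]; simpa using hde
        rw [mem_symmDiff] at hd ⊢
        rcases hd with ⟨h1, h2⟩ | ⟨h1, h2⟩
        · refine Or.inl ⟨?_, h2⟩
          by_contra hdc
          exact hnot (mem_symmDiff.2 (Or.inl ⟨h1, hdc⟩))
        · refine Or.inr ⟨h1, ?_⟩
          intro hdc
          exact hnot (mem_symmDiff.2 (Or.inr ⟨hdc, h2⟩))
    have hfin : (({e} : Set (Set V)) ∪ symmDiff c.1 b.1).Finite :=
      (Set.finite_singleton e).union (h.fin_vtx hsep (P_iff_vtx.1 c.2) (P_iff_vtx.1 b.2))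
    have h1 : (symmDiff a.1 b.1).ncard ≤ (({e} : Set (Set V)) ∪ symmDiff c.1 b.1).ncard :=
      Set.ncard_le_ncard hsub hfin
    have h2 : (({e} : Set (Set V)) ∪ symmDiff c.1 b.1).ncard ≤
        1 + (symmDiff c.1 b.1).ncard := by
      simpa using Set.ncard_union_le ({e} : Set (Set V)) (symmDiff c.1 b.1)
    simp only [SimpleGraph.Walk.length_cons]
    omega

end Dunwoody

/-- **Oriented version of Dunwoody's tree construction.** -/
theorem dunwoody_oriented_tree {V : Type*} (𝓔 : Set (Set V))
    (hne : 𝓔.Nonempty)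
    (hsep : ∀ v w : V, (symmDiff {d ∈ 𝓔 | v ∈ d} {d ∈ 𝓔 | w ∈ d}).Finite)
    (hnested : ∀ e ∈ 𝓔, ∀ f ∈ 𝓔,
      e ∩ f = ∅ ∨ e ∩ fᶜ = ∅ ∨ eᶜ ∩ f = ∅ ∨ eᶜ ∩ fᶜ = ∅)
    (hempty : ∅ ∉ 𝓔) (huniv : Set.univ ∉ 𝓔)
    (hcompl : ∀ e ∈ 𝓔, eᶜ ∉ 𝓔) :
    ∃ T : SimpleGraph {x : Set (Set V) //
        (∃ e ∈ 𝓔, x = dunwoodyIota 𝓔 e) ∨ ∃ e ∈ 𝓔, x = dunwoodyTau' 𝓔 e},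
      (∀ x y, T.Adj x y ↔ ∃ e ∈ 𝓔,
        ({x.1, y.1} : Set (Set (Set V))) = {dunwoodyIota 𝓔 e, dunwoodyTau' 𝓔 e}) ∧
      T.IsTree ∧
      ∀ x y, T.dist x y = (symmDiff x.1 y.1).ncard := by
  have h : Dunwoody.Good 𝓔 := ⟨hnested, hempty, huniv, hcompl⟩
  refine ⟨Dunwoody.Graph 𝓔, fun x y => h.adj_iff x y, ⟨?_, h.acyclic⟩, fun x y => ?_⟩
  · refine (SimpleGraph.connected_iff (G := Dunwoody.Graph 𝓔)).2 ?_
    constructor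
    · intro x y
      obtain ⟨p, -⟩ := h.exists_walk hsep _ x y rfl
      exact ⟨p⟩
    · obtain ⟨e, he⟩ := hne
      exact ⟨⟨dunwoodyIota 𝓔 e, Or.inl ⟨e, he, rfl⟩⟩⟩
  · refine le_antisymm ?_ ?_
    · obtain ⟨p, hp⟩ := h.exists_walk hsep _ x y rfl
      exact hp ▸ SimpleGraph.dist_le p
    · have hreach : (Dunwoody.Graph 𝓔).Reachable x y :=
        ⟨(h.exists_walk hsep _ x y rfl).choose⟩
      obtain ⟨p, hp⟩ := hreach.exists_walk_length_eq_dist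
      exact (h.length_le hsep p).trans hp.le
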